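/- Let m ≥ 1, let Φ ∈ ℝ^{m×m} be a fixed symmetric matrix, and let W be a random m×m real matrix with i.i.d. standard Gaussian N(0,1) entries. Let W̄ be the matrix with entries W̄_{μα} = (1/m)·Σ_{ν=1}^m W_{να}, set W̃ = W − W̄, and define the random matrix G = W̃ᵀ Φ + Φ W̃. Then for all indices α, β, γ, δ: (1/m)·E[G_{αβ}·G_{γδ}] = δ_{αγ}·C(Φ^{•β}, Φ^{•δ}) + δ_{αδ}·C(Φ^{•β}, Φ^{•γ}) + δ_{γβ}·C(Φ^{•δ}, Φ^{•α}) + δ_{βδ}·C(Φ^{•α}, Φ^{•γ}), where Φ^{•β} ∈ ℝ^m denotes the β-th column of Φ, C(u, v) = (1/m)·Σ_{α=1}^m u_α v_α − ū·v̄, and ū = (1/m)·Σ_{α=1}^m u_α. -/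

import Mathlib

open MeasureTheory ProbabilityTheory Matrix

/-- The column-centered matrix `W̃ = W − W̄`, where `W̄` replaces each entry
by the empirical average of its column. -/
noncomputable def centered (m : ℕ) (W : Fin m × Fin m → ℝ) :
    Matrix (Fin m) (Fin m) ℝ :=
  Matrix.of fun i j => W (i, j) - (1 / (m : ℝ)) * ∑ ν : Fin m, W (ν, j)

/-- `C(u,v) = (1/m)·⟨u,v⟩ − ū·v̄`, the empirical covariance of two vectors. -/
noncomputable def covC {m : ℕ} (u v : Fin m → ℝ) : ℝ :=
  (1 / (m : ℝ)) * ∑ i : Fin m, u i * v i -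
    ((1 / (m : ℝ)) * ∑ i : Fin m, u i) * ((1 / (m : ℝ)) * ∑ i : Fin m, v i)

section Aux
open Real


lemma exp_half_eq : (fun x : ℝ => rexp (-(x ^ 2 / 2))) = fun x => rexp (-(1/2 : ℝ) * x ^ 2) := by
  funext x; congr 1; ring

lemma gpdf_eq : gaussianPDFReal 0 1 = fun x => (Real.sqrt (2 * π))⁻¹ * rexp (-(x ^ 2 / 2)) := by
  funext x
  simp [gaussianPDFReal, neg_div]

lemma int_exp : ∫ x : ℝ, rexp (-(x ^ 2 / 2)) = Real.sqrt (2 * π) := by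
  rw [exp_half_eq, integral_gaussian]
  rw [show π / (1/2 : ℝ) = 2 * π by ring]

lemma integrable_exp_half : Integrable (fun x : ℝ => rexp (-(x ^ 2 / 2))) := by
  rw [exp_half_eq]; exact integrable_exp_neg_mul_sq (by norm_num)

lemma integrable_mul_exp_half : Integrable (fun x : ℝ => x * rexp (-(x ^ 2 / 2))) := by
  have : (fun x : ℝ => x * rexp (-(x ^ 2 / 2))) = fun x => x * rexp (-(1/2 : ℝ) * x ^ 2) := by
    funext x; congr 1; ring
  rw [this]; exact integrable_mul_exp_neg_mul_sq (by norm_num)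

lemma integrable_sq_exp_half : Integrable (fun x : ℝ => x ^ 2 * rexp (-(x ^ 2 / 2))) := by
  have h := integrable_rpow_mul_exp_neg_mul_sq (b := 1/2) (by norm_num) (s := 2) (by norm_num)
  have : (fun x : ℝ => x ^ 2 * rexp (-(x ^ 2 / 2))) = fun x => x ^ (2:ℝ) * rexp (-(1/2 : ℝ) * x ^ 2) := by
    funext x
    rw [show (2:ℝ) = ((2:ℕ):ℝ) by norm_num, Real.rpow_natCast]
    congr 2; ring
  rw [this]; exact h

lemma hderiv_exp (x : ℝ) : HasDerivAt (fun x : ℝ => rexp (-(x ^ 2 / 2))) (-x * rexp (-(x ^ 2 / 2))) x := by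
  have h := (((hasDerivAt_pow 2 x).div_const 2).neg).exp
  convert h using 1
  · rfl
  simp only [Pi.neg_apply]
  norm_num
  ring

lemma int_x_exp : ∫ x : ℝ, x * rexp (-(x ^ 2 / 2)) = 0 := by
  have := integral_eq_zero_of_hasDerivAt_of_integrable
    (f := fun x : ℝ => -rexp (-(x ^ 2 / 2))) (f' := fun x => x * rexp (-(x ^ 2 / 2)))
    (fun x => by convert (hderiv_exp x).neg using 1; rfl; ring) integrable_mul_exp_half integrable_exp_half.neg
  simpa using this

lemma int_sq_exp : ∫ x : ℝ, x ^ 2 * rexp (-(x ^ 2 / 2)) = Real.sqrt (2 * π) := by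
  have hD : ∀ x : ℝ, HasDerivAt (fun x : ℝ => -x * rexp (-(x ^ 2 / 2)))
      (x ^ 2 * rexp (-(x ^ 2 / 2)) - rexp (-(x ^ 2 / 2))) x := by
    intro x
    have h := ((hasDerivAt_id x).neg).mul (hderiv_exp x)
    convert h using 1
    · rfl
    · rfl
    show _ = -1 * rexp (-(x ^ 2 / 2)) + -x * (-x * rexp (-(x ^ 2 / 2)))
    ring
    exact funext fun y => rfl
  have hneg : Integrable (fun x : ℝ => -x * rexp (-(x ^ 2 / 2))) := by
    have e : (fun x : ℝ => -x * rexp (-(x ^ 2 / 2))) = fun x => -(x * rexp (-(x ^ 2 / 2))) := by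
      funext x; ring
    rw [e]; exact integrable_mul_exp_half.neg
  have hzero := integral_eq_zero_of_hasDerivAt_of_integrable hD
    (integrable_sq_exp_half.sub integrable_exp_half) hneg
  rw [integral_sub integrable_sq_exp_half integrable_exp_half, int_exp] at hzero
  linarith

lemma integral_gaussReal (g : ℝ → ℝ) :
    ∫ x, g x ∂(gaussianReal 0 1) = ∫ x, gaussianPDFReal 0 1 x * g x := by
  rw [gaussianReal_of_var_ne_zero _ one_ne_zero]
  have hmeas : Measurable fun x => (gaussianPDFReal 0 1 x).toNNReal :=
    (measurable_gaussianPDFReal 0 1).real_toNNReal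
  have : gaussianPDF 0 1 = fun x => ((gaussianPDFReal 0 1 x).toNNReal : ENNReal) := by
    funext x; rfl
  rw [this, integral_withDensity_eq_integral_smul hmeas]
  congr 1
  funext x
  rw [NNReal.smul_def, Real.coe_toNNReal _ (gaussianPDFReal_nonneg 0 1 x), smul_eq_mul]

lemma integrable_gaussReal_iff (g : ℝ → ℝ) :
    Integrable g (gaussianReal 0 1) ↔ Integrable (fun x => gaussianPDFReal 0 1 x * g x) := by
  rw [gaussianReal_of_var_ne_zero _ one_ne_zero]
  have hmeas : Measurable fun x => (gaussianPDFReal 0 1 x).toNNReal :=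
    (measurable_gaussianPDFReal 0 1).real_toNNReal
  have : gaussianPDF 0 1 = fun x => ((gaussianPDFReal 0 1 x).toNNReal : ENNReal) := by
    funext x; rfl
  rw [this, integrable_withDensity_iff_integrable_smul hmeas]
  constructor <;> intro h <;> refine h.congr (Filter.Eventually.of_forall fun x => ?_) <;>
    simp only [NNReal.smul_def, Real.coe_toNNReal _ (gaussianPDFReal_nonneg 0 1 x), smul_eq_mul]

lemma sqrt_two_pi_pos : (0:ℝ) < Real.sqrt (2 * π) :=
  Real.sqrt_pos.2 (by positivity)

lemma g_int_one : ∫ x, (1:ℝ) ∂(gaussianReal 0 1) = 1 := by simp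

lemma g_int_id : ∫ x, x ∂(gaussianReal 0 1) = 0 := by
  rw [integral_gaussReal, gpdf_eq]
  simp only []
  have : (fun x : ℝ => (Real.sqrt (2 * π))⁻¹ * rexp (-(x ^ 2 / 2)) * x)
      = fun x => (Real.sqrt (2 * π))⁻¹ * (x * rexp (-(x ^ 2 / 2))) := by funext x; ring
  rw [this, integral_const_mul, int_x_exp, mul_zero]

lemma g_int_sq : ∫ x, x * x ∂(gaussianReal 0 1) = 1 := by
  rw [integral_gaussReal, gpdf_eq]
  have : (fun x : ℝ => (Real.sqrt (2 * π))⁻¹ * rexp (-(x ^ 2 / 2)) * (x * x))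
      = fun x => (Real.sqrt (2 * π))⁻¹ * (x ^ 2 * rexp (-(x ^ 2 / 2))) := by funext x; ring
  rw [this, integral_const_mul, int_sq_exp, inv_mul_cancel₀ (ne_of_gt sqrt_two_pi_pos)]

lemma g_integrable_one : Integrable (fun _ : ℝ => (1:ℝ)) (gaussianReal 0 1) :=
  integrable_const 1

lemma g_integrable_id : Integrable (fun x : ℝ => x) (gaussianReal 0 1) := by
  rw [integrable_gaussReal_iff, gpdf_eq]
  have : (fun x : ℝ => (Real.sqrt (2 * π))⁻¹ * rexp (-(x ^ 2 / 2)) * x)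
      = fun x => (Real.sqrt (2 * π))⁻¹ * (x * rexp (-(x ^ 2 / 2))) := by funext x; ring
  rw [this]
  exact integrable_mul_exp_half.const_mul _

lemma g_integrable_sq : Integrable (fun x : ℝ => x * x) (gaussianReal 0 1) := by
  rw [integrable_gaussReal_iff, gpdf_eq]
  have : (fun x : ℝ => (Real.sqrt (2 * π))⁻¹ * rexp (-(x ^ 2 / 2)) * (x * x))
      = fun x => (Real.sqrt (2 * π))⁻¹ * (x ^ 2 * rexp (-(x ^ 2 / 2))) := by funext x; ring
  rw [this]
  exact integrable_sq_exp_half.const_mul _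

section Pi
variable {ι : Type*} [Fintype ι] [DecidableEq ι]

/-- coordinate pair factor -/
noncomputable def cg (p q k : ι) : ℝ → ℝ :=
  fun t => (if k = p then t else 1) * (if k = q then t else 1)

lemma cg_integrable (p q k : ι) : Integrable (cg p q k) (gaussianReal 0 1) := by
  unfold cg
  by_cases hp : k = p <;> by_cases hq : k = q
  · subst hp; subst hq
    simp only [if_pos rfl]
    exact g_integrable_sq
  · subst hp
    simp only [if_pos rfl, if_neg hq, mul_one]
    exact g_integrable_id
  · subst hq
    simp only [if_pos rfl, if_neg hp, one_mul]
    exact g_integrable_id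
  · simp only [if_neg hp, if_neg hq, mul_one]
    exact g_integrable_one

lemma prod_cg (p q : ι) (W : ι → ℝ) : ∏ k, cg p q k (W k) = W p * W q := by
  unfold cg
  rw [Finset.prod_mul_distrib]
  congr 1 <;> simp [Finset.prod_ite_eq']

lemma pi_integrable_pair (p q : ι) :
    Integrable (fun W : ι → ℝ => W p * W q) (Measure.pi fun _ : ι => gaussianReal 0 1) := by
  letI : MeasureSpace ℝ := ⟨gaussianReal 0 1⟩
  haveI : SigmaFinite (volume : Measure ℝ) := (inferInstance : SigmaFinite (gaussianReal 0 1))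
  have hvol : (Measure.pi fun _ : ι => gaussianReal 0 1) = (volume : Measure (ι → ℝ)) := by
    rw [volume_pi]
    rfl
  rw [hvol]
  have : (fun W : ι → ℝ => W p * W q) = fun W => ∏ k, cg p q k (W k) := by
    funext W; rw [prod_cg]
  rw [this]
  exact Integrable.fintype_prod (f := cg p q) (fun k => cg_integrable p q k)

lemma pi_moment_pair (p q : ι) :
    ∫ W : ι → ℝ, W p * W q ∂(Measure.pi fun _ : ι => gaussianReal 0 1)
      = if p = q then 1 else 0 := by
  letI : MeasureSpace ℝ := ⟨gaussianReal 0 1⟩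
  haveI : SigmaFinite (volume : Measure ℝ) := (inferInstance : SigmaFinite (gaussianReal 0 1))
  haveI : IsProbabilityMeasure (volume : Measure ℝ) :=
    (inferInstance : IsProbabilityMeasure (gaussianReal 0 1))
  have hvol : (Measure.pi fun _ : ι => gaussianReal 0 1) = (volume : Measure (ι → ℝ)) := by
    rw [volume_pi]
    rfl
  rw [hvol]
  have : (fun W : ι → ℝ => W p * W q) = fun W => ∏ k, cg p q k (W k) := by
    funext W; rw [prod_cg]
  rw [this, ← hvol, MeasureTheory.integral_fintype_prod_eq_prod (f := cg p q)]
  by_cases hpq : p = q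
  · subst hpq
    rw [if_pos rfl]
    apply Finset.prod_eq_one
    intro k _
    by_cases hk : k = p
    · subst hk; simpa [cg] using g_int_sq
    · simp [cg, hk]
  · rw [if_neg hpq]
    apply Finset.prod_eq_zero (Finset.mem_univ p)
    have : cg p q p = fun t => t := by funext t; simp [cg, hpq]
    rw [this]
    exact g_int_id

/-- linear form -/
noncomputable def linf (A : ι → ℝ) (W : ι → ℝ) : ℝ := ∑ k, A k * W k

lemma lin_moment (A B : ι → ℝ) :
    ∫ W : ι → ℝ, linf A W * linf B W ∂(Measure.pi fun _ : ι => gaussianReal 0 1)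
      = ∑ k, A k * B k := by
  have hexp : (fun W : ι → ℝ => linf A W * linf B W)
      = fun W => ∑ k : ι, ∑ l : ι, (A k * B l) * (W k * W l) := by
    funext W
    rw [linf, linf, Finset.sum_mul_sum]
    exact Finset.sum_congr rfl fun k _ => Finset.sum_congr rfl fun l _ => by ring
  rw [hexp]
  rw [integral_finset_sum _ (fun k _ => integrable_finset_sum _
    (fun l _ => (pi_integrable_pair k l).const_mul _))]
  have : ∀ k : ι, (∫ W : ι → ℝ, ∑ l : ι, (A k * B l) * (W k * W l)
      ∂(Measure.pi fun _ : ι => gaussianReal 0 1)) = A k * B k := by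
    intro k
    rw [integral_finset_sum _ (fun l _ => (pi_integrable_pair k l).const_mul _)]
    have : ∀ l : ι, (∫ W : ι → ℝ, (A k * B l) * (W k * W l)
        ∂(Measure.pi fun _ : ι => gaussianReal 0 1)) = (A k * B l) * if k = l then 1 else 0 := by
      intro l
      rw [integral_const_mul, pi_moment_pair]
    simp only [this, mul_ite, mul_one, mul_zero, Finset.sum_ite_eq, Finset.mem_univ, if_true]
  simp only [this]

end Pi


/-- centered column of Φ -/
noncomputable def psiv {m : ℕ} (Φ : Matrix (Fin m) (Fin m) ℝ) (b r : Fin m) : ℝ :=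
  Φ r b - (1 / (m : ℝ)) * ∑ ν : Fin m, Φ ν b

noncomputable def coefv {m : ℕ} (Φ : Matrix (Fin m) (Fin m) ℝ) (a b : Fin m)
    (k : Fin m × Fin m) : ℝ :=
  (if k.2 = a then psiv Φ b k.1 else 0) + (if k.2 = b then psiv Φ a k.1 else 0)

lemma sum_sub_mul (m : ℕ) (u v : Fin m → ℝ) (x : ℝ) :
    ∑ ν : Fin m, (u ν - x) * v ν = ∑ ν : Fin m, u ν * v ν - x * ∑ ν : Fin m, v ν := by
  have h : ∀ ν, (u ν - x) * v ν = u ν * v ν - x * v ν := fun ν => by ring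
  simp only [h, Finset.sum_sub_distrib, Finset.mul_sum]

lemma sum_mul_sub (m : ℕ) (u v : Fin m → ℝ) (x : ℝ) :
    ∑ ν : Fin m, u ν * (v ν - x) = ∑ ν : Fin m, u ν * v ν - x * ∑ ν : Fin m, u ν := by
  have h : ∀ ν, u ν * (v ν - x) = u ν * v ν - x * u ν := fun ν => by ring
  simp only [h, Finset.sum_sub_distrib, Finset.mul_sum]

lemma G_eq_linf (m : ℕ) (Φ : Matrix (Fin m) (Fin m) ℝ) (hΦ : Φ.IsSymm) (a b : Fin m)
    (W : Fin m × Fin m → ℝ) :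
    ((centered m W)ᵀ * Φ + Φ * centered m W) a b = linf (coefv Φ a b) W := by
  have hsym : ∀ i j, Φ i j = Φ j i := fun i j => (hΦ.apply j i)
  have hR : linf (coefv Φ a b) W
      = ∑ ρ : Fin m, (psiv Φ b ρ * W (ρ, a) + psiv Φ a ρ * W (ρ, b)) := by
    rw [linf, Fintype.sum_prod_type]
    refine Finset.sum_congr rfl fun ρ _ => ?_
    simp only [coefv, add_mul, ite_mul, zero_mul, Finset.sum_add_distrib,
      Finset.sum_ite_eq', Finset.mem_univ, if_true]
  rw [hR]
  simp only [Matrix.add_apply, Matrix.mul_apply, Matrix.transpose_apply, centered,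
    Matrix.of_apply]
  rw [Finset.sum_add_distrib]
  simp only [psiv]
  rw [sum_sub_mul, sum_mul_sub, sum_sub_mul, sum_sub_mul]
  have h1 : ∑ ν : Fin m, Φ a ν * W (ν, b) = ∑ ν : Fin m, Φ ν a * W (ν, b) :=
    Finset.sum_congr rfl fun ν _ => by rw [hsym a ν]
  have h2 : ∑ ν : Fin m, Φ a ν = ∑ ν : Fin m, Φ ν a :=
    Finset.sum_congr rfl fun ν _ => hsym a ν
  rw [h1, h2]
  have h3 : ∑ ν : Fin m, W (ν, a) * Φ ν b = ∑ ν : Fin m, Φ ν b * W (ν, a) :=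
    Finset.sum_congr rfl fun ν _ => mul_comm _ _
  rw [h3]
  ring

lemma sum_ite_mul_ite (m : ℕ) (a b : Fin m) (x y : Fin m → ℝ) :
    ∑ σ : Fin m, (if σ = a then x σ else 0) * (if σ = b then y σ else 0)
      = if a = b then x a * y a else 0 := by
  simp only [ite_mul, zero_mul, Finset.sum_ite_eq', Finset.mem_univ, if_true,
    mul_ite, mul_zero]
  by_cases h : a = b
  · subst h; simp
  · simp [h, Ne.symm h]

lemma coef_sum (m : ℕ) (Φ : Matrix (Fin m) (Fin m) ℝ) (α β γ δ : Fin m) :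
    ∑ k : Fin m × Fin m, coefv Φ α β k * coefv Φ γ δ k
      = (if α = γ then (1:ℝ) else 0) * ∑ ρ : Fin m, psiv Φ β ρ * psiv Φ δ ρ
      + (if α = δ then (1:ℝ) else 0) * ∑ ρ : Fin m, psiv Φ β ρ * psiv Φ γ ρ
      + (if β = γ then (1:ℝ) else 0) * ∑ ρ : Fin m, psiv Φ α ρ * psiv Φ δ ρ
      + (if β = δ then (1:ℝ) else 0) * ∑ ρ : Fin m, psiv Φ α ρ * psiv Φ γ ρ := by
  rw [Fintype.sum_prod_type]
  have hinner : ∀ ρ : Fin m, ∑ σ : Fin m, coefv Φ α β (ρ, σ) * coefv Φ γ δ (ρ, σ)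
      = (if α = γ then (1:ℝ) else 0) * (psiv Φ β ρ * psiv Φ δ ρ)
      + (if α = δ then (1:ℝ) else 0) * (psiv Φ β ρ * psiv Φ γ ρ)
      + (if β = γ then (1:ℝ) else 0) * (psiv Φ α ρ * psiv Φ δ ρ)
      + (if β = δ then (1:ℝ) else 0) * (psiv Φ α ρ * psiv Φ γ ρ) := by
    intro ρ
    have hexp : ∀ σ : Fin m, coefv Φ α β (ρ, σ) * coefv Φ γ δ (ρ, σ)
        = (if σ = α then psiv Φ β ρ else 0) * (if σ = γ then psiv Φ δ ρ else 0)
        + (if σ = α then psiv Φ β ρ else 0) * (if σ = δ then psiv Φ γ ρ else 0)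
        + (if σ = β then psiv Φ α ρ else 0) * (if σ = γ then psiv Φ δ ρ else 0)
        + (if σ = β then psiv Φ α ρ else 0) * (if σ = δ then psiv Φ γ ρ else 0) := by
      intro σ
      simp only [coefv]
      ring
    simp only [hexp, Finset.sum_add_distrib,
      sum_ite_mul_ite (x := fun _ => psiv Φ β ρ) (y := fun _ => psiv Φ δ ρ),
      sum_ite_mul_ite (x := fun _ => psiv Φ β ρ) (y := fun _ => psiv Φ γ ρ),
      sum_ite_mul_ite (x := fun _ => psiv Φ α ρ) (y := fun _ => psiv Φ δ ρ),
      sum_ite_mul_ite (x := fun _ => psiv Φ α ρ) (y := fun _ => psiv Φ γ ρ)]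
    by_cases h1 : α = γ <;> by_cases h2 : α = δ <;> by_cases h3 : β = γ <;>
      by_cases h4 : β = δ <;> simp [h1, h2, h3, h4]
  simp only [hinner, Finset.sum_add_distrib, ← Finset.mul_sum]

lemma psi_cov (m : ℕ) (hm : 1 ≤ m) (Φ : Matrix (Fin m) (Fin m) ℝ) (b d : Fin m) :
    (1 / (m : ℝ)) * ∑ ρ : Fin m, psiv Φ b ρ * psiv Φ d ρ
      = covC (fun i => Φ i b) (fun i => Φ i d) := by
  have hm0 : (m : ℝ) ≠ 0 := Nat.cast_ne_zero.mpr (by omega)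
  have hexp : ∀ ρ, psiv Φ b ρ * psiv Φ d ρ
      = Φ ρ b * Φ ρ d
        - ((1 / (m : ℝ)) * ∑ ν : Fin m, Φ ν d) * Φ ρ b
        - ((1 / (m : ℝ)) * ∑ ν : Fin m, Φ ν b) * Φ ρ d
        + ((1 / (m : ℝ)) * ∑ ν : Fin m, Φ ν b) * ((1 / (m : ℝ)) * ∑ ν : Fin m, Φ ν d) := by
    intro ρ
    simp only [psiv]
    ring
  simp only [hexp, Finset.sum_add_distrib, Finset.sum_sub_distrib, Finset.sum_const,
    Finset.card_univ, Fintype.card_fin, nsmul_eq_mul, ← Finset.mul_sum, covC]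
  field_simp
  ring

lemma covC_comm {m : ℕ} (u v : Fin m → ℝ) : covC u v = covC v u := by
  unfold covC
  have h : ∑ i : Fin m, u i * v i = ∑ i : Fin m, v i * u i :=
    Finset.sum_congr rfl fun i _ => mul_comm _ _
  rw [h]; ring

end Aux

theorem mixit_diffusion_coefficient (m : ℕ) (hm : 1 ≤ m)
    (Φ : Matrix (Fin m) (Fin m) ℝ) (hΦ : Φ.IsSymm) (α β γ δ : Fin m) :
    (1 / (m : ℝ)) *
      (∫ W : Fin m × Fin m → ℝ,
          ((centered m W)ᵀ * Φ + Φ * centered m W) α β *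
            ((centered m W)ᵀ * Φ + Φ * centered m W) γ δ
          ∂(Measure.pi fun _ : Fin m × Fin m => gaussianReal 0 1)) =
      (if α = γ then (1 : ℝ) else 0) *
          covC (fun i => Φ i β) (fun i => Φ i δ) +
        (if α = δ then (1 : ℝ) else 0) *
          covC (fun i => Φ i β) (fun i => Φ i γ) +
        (if γ = β then (1 : ℝ) else 0) *
          covC (fun i => Φ i δ) (fun i => Φ i α) +
        (if β = δ then (1 : ℝ) else 0) *
          covC (fun i => Φ i α) (fun i => Φ i γ) := by
  have hG : ∀ (a b : Fin m) (W : Fin m × Fin m → ℝ),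
      ((centered m W)ᵀ * Φ + Φ * centered m W) a b = linf (coefv Φ a b) W :=
    fun a b W => G_eq_linf m Φ hΦ a b W
  simp only [hG]
  rw [lin_moment, coef_sum]
  have hre : ∀ c S : ℝ, (1/(m:ℝ)) * (c * S) = c * ((1/(m:ℝ)) * S) := fun c S => by ring
  rw [mul_add, mul_add, mul_add, hre, hre, hre, hre,
    psi_cov m hm Φ β δ, psi_cov m hm Φ β γ, psi_cov m hm Φ α δ, psi_cov m hm Φ α γ]
  have h3 : (if β = γ then (1:ℝ) else 0) * covC (fun i => Φ i α) (fun i => Φ i δ)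
      = (if γ = β then (1:ℝ) else 0) * covC (fun i => Φ i δ) (fun i => Φ i α) := by
    rw [covC_comm]
    congr 1
    by_cases h : β = γ
    · simp [h]
    · simp [h, Ne.symm h]
  rw [h3]
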